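/- Let n ≥ 2 and let G ∈ 𝒢_{2n} satisfy F(G) = n−1. If G contains no independent set of size n, then G is a brick (i.e., G is 3-connected and bicritical), and in particular G is 1-extendable. -/

import Mathlib

set_option maxHeartbeats 1000000


open SimpleGraph

/-- `M` is a perfect matching of the simple graph `G`, viewed as a set of edges:
the edges of `M` are pairwise disjoint edges of `G` covering every vertex. -/
def IsPM {V : Type*} (G : SimpleGraph V) (M : Set (Sym2 V)) : Prop :=
  M ⊆ G.edgeSet ∧
  (∀ e ∈ M, ∀ f ∈ M, e ≠ f → ∀ v : V, v ∈ e → v ∉ f) ∧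
  (∀ v : V, ∃ e ∈ M, v ∈ e)

/-- `S` is a forcing set of the perfect matching `M` of `G`:
`S ⊆ M` and `M` is the unique perfect matching of `G` containing `S`. -/
def IsForcingSet {V : Type*} (G : SimpleGraph V) (M S : Set (Sym2 V)) : Prop :=
  S ⊆ M ∧ ∀ M', IsPM G M' → S ⊆ M' → M' = M

/-- The forcing number `f(G,M)`: smallest cardinality of a forcing set of `M`. -/
noncomputable def forcingNum {V : Type*} (G : SimpleGraph V) (M : Set (Sym2 V)) : ℕ :=
  sInf {k | ∃ S, IsForcingSet G M S ∧ S.ncard = k}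

/-- The minimum forcing number `f(G)`. -/
noncomputable def minForcing {V : Type*} (G : SimpleGraph V) : ℕ :=
  sInf {k | ∃ M, IsPM G M ∧ forcingNum G M = k}

/-- The maximum forcing number `F(G)`. -/
noncomputable def maxForcing {V : Type*} (G : SimpleGraph V) : ℕ :=
  sSup {k | ∃ M, IsPM G M ∧ forcingNum G M = k}

/-- Vertex connectivity `κ(G)`: least size of a set of vertices whose deletion
disconnects the graph or leaves at most one vertex. -/
noncomputable def vertexConn {V : Type*} (G : SimpleGraph V) : ℕ :=
  sInf {k | ∃ X : Set V, X.ncard = k ∧ (¬ (G.induce Xᶜ).Connected ∨ Xᶜ.ncard ≤ 1)}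

/-- Edge connectivity `λ(G)`: least size of a set of edges whose deletion
disconnects the graph. -/
noncomputable def edgeConn {V : Type*} (G : SimpleGraph V) : ℕ :=
  sInf {k | ∃ F : Set (Sym2 V), F ⊆ G.edgeSet ∧ F.ncard = k ∧ ¬ (G.deleteEdges F).Connected}

/-- `G` is `l`-extendable: `G` is connected, has at least `2l+2` vertices, has a
perfect matching, and every matching of size `l` extends to a perfect matching. -/
def IsExtendable {V : Type*} [Fintype V] (G : SimpleGraph V) (l : ℕ) : Prop :=
  G.Connected ∧ 2 * l + 2 ≤ Fintype.card V ∧ (∃ M, IsPM G M) ∧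
    ∀ N : Set (Sym2 V), N ⊆ G.edgeSet →
      (∀ e ∈ N, ∀ f ∈ N, e ≠ f → ∀ v : V, v ∈ e → v ∉ f) → N.ncard = l →
      ∃ M, IsPM G M ∧ N ⊆ M

/-- `G` is factor-critical: deleting any vertex leaves a graph with a perfect matching. -/
def IsFactorCritical {V : Type*} (G : SimpleGraph V) : Prop :=
  ∀ v : V, ∃ M, IsPM (G.induce {v}ᶜ) M

/-- `o(G)`: the number of connected components of odd order. -/
noncomputable def oddComponents {V : Type*} (G : SimpleGraph V) : ℕ :=
  {c : G.ConnectedComponent | Odd c.supp.ncard}.ncard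

/-- `G` belongs to `𝒦_{n,n}⁺`: it is obtained from `K_{n,n}` by adding edges inside one
partite set; equivalently there is an independent set `A` of size `n` all of whose
vertices are adjacent to all vertices outside `A`. -/
def InKnnPlus {V : Type*} (n : ℕ) (G : SimpleGraph V) : Prop :=
  ∃ A : Set V, A.ncard = n ∧ (∀ a ∈ A, ∀ b ∈ A, ¬ G.Adj a b) ∧
    ∀ a ∈ A, ∀ b ∉ A, G.Adj a b

/-- `M` is a perfect matching of the subgraph of `G` induced by the vertex set `T`. -/
def IsPMOn {V : Type*} (G : SimpleGraph V) (T : Set V) (M : Set (Sym2 V)) : Prop :=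
  M ⊆ G.edgeSet ∧ (∀ e ∈ M, ∀ w : V, w ∈ e → w ∈ T) ∧
  (∀ e ∈ M, ∀ f ∈ M, e ≠ f → ∀ v : V, v ∈ e → v ∉ f) ∧
  (∀ w ∈ T, ∃ e ∈ M, w ∈ e)

/-- The forcing number of the perfect matching `M` of the subgraph of `G`
induced by the vertex set `T`. -/
noncomputable def forcingNumOn {V : Type*} (G : SimpleGraph V) (T : Set V)
    (M : Set (Sym2 V)) : ℕ :=
  sInf {k | ∃ S, S ⊆ M ∧ (∀ M', IsPMOn G T M' → S ⊆ M' → M' = M) ∧ S.ncard = k}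

/-- `{i,j}` is one of the `k` special pairs `{2t, 2t+1}` (0-indexed), `t < k`. -/
def pairIdx (k : ℕ) {n : ℕ} (i j : Fin n) : Prop :=
  ∃ t, t < k ∧ ((i.val = 2 * t ∧ j.val = 2 * t + 1) ∨ (j.val = 2 * t ∧ i.val = 2 * t + 1))

/-- The graph `H_k` on vertices `u_0,…,u_{n-1}` (left copy) and `v_0,…,v_{n-1}`
(right copy): edges `u_i v_i` for all `i`; `u_{2t} u_{2t+1}` and `v_{2t} v_{2t+1}`
for `t < k`; and `u_i v_j`, `u_j v_i` for every pair `i ≠ j` that is not one of the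
`k` special pairs. -/
def Hgraph (n k : ℕ) : SimpleGraph (Fin n ⊕ Fin n) :=
  SimpleGraph.fromRel (fun x y =>
    match x, y with
    | Sum.inl i, Sum.inr j => i = j ∨ ¬ pairIdx k i j
    | Sum.inl i, Sum.inl j => pairIdx k i j
    | Sum.inr i, Sum.inr j => pairIdx k i j
    | Sum.inr _, Sum.inl _ => False)

/-- The perfect matching `M₀ = {u_i v_i : i}` of `H_k`. -/
def M0 (n : ℕ) : Set (Sym2 (Fin n ⊕ Fin n)) :=
  {e | ∃ i : Fin n, e = s(Sum.inl i, Sum.inr i)}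

section myaux
variable {V : Type*} {G : SimpleGraph V} {M : Set (Sym2 V)}

lemma pm_unique_edge (hM : IsPM G M) {e f : Sym2 V} {v : V} (he : e ∈ M) (hf : f ∈ M)
    (hve : v ∈ e) (hvf : v ∈ f) : e = f := by
  by_contra hne
  exact hM.2.1 e he f hf hne v hve hvf

lemma pm_decomp (hM : IsPM G M) {e : Sym2 V} (he : e ∈ M) :
    ∃ x y : V, e = s(x,y) ∧ x ≠ y ∧ G.Adj x y := by
  induction e using Sym2.ind with
  | _ x y =>
    have : G.Adj x y := (SimpleGraph.mem_edgeSet G).mp (hM.1 he)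
    exact ⟨x, y, rfl, this.ne, this⟩

lemma pm_partner (hM : IsPM G M) (v : V) :
    ∃ w : V, s(v,w) ∈ M ∧ v ≠ w ∧ G.Adj v w := by
  obtain ⟨e, he, hve⟩ := hM.2.2 v
  obtain ⟨x, y, rfl, hxy, hadj⟩ := pm_decomp hM he
  rcases Sym2.mem_iff.1 hve with rfl | rfl
  · exact ⟨y, he, hxy, hadj⟩
  · exact ⟨x, by rwa [Sym2.eq_swap], hxy.symm, hadj.symm⟩

lemma pm_superset (hM : IsPM G M) {M' : Set (Sym2 V)} (hM' : IsPM G M') (h : M ⊆ M') :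
    M' = M := by
  ext f
  refine ⟨fun hf => ?_, fun hf => h hf⟩
  obtain ⟨x, y, rfl, hxy, hadj⟩ := pm_decomp hM' hf
  obtain ⟨e, he, hxe⟩ := hM.2.2 x
  by_contra hfM
  have hne : e ≠ s(x,y) := fun h' => hfM (h' ▸ he)
  exact hM'.2.1 e (h he) s(x,y) hf hne x hxe (Sym2.mem_mk_left x y)

lemma pm_ncard [Fintype V] (hM : IsPM G M) {n : ℕ} (hcard : Fintype.card V = 2 * n) :
    M.ncard = n := by
  classical
  have hMfin : M.Finite := Set.toFinite M
  set F : Finset (Sym2 V) := hMfin.toFinset with hF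
  -- assign each vertex its edge
  have hex : ∀ v : V, ∃ e, e ∈ F ∧ v ∈ e := by
    intro v
    obtain ⟨e, he, hv⟩ := hM.2.2 v
    exact ⟨e, hMfin.mem_toFinset.2 he, hv⟩
  choose f hf1 hf2 using hex
  have hcount : (Finset.univ : Finset V).card = ∑ e ∈ F, (Finset.univ.filter fun v => f v = e).card :=
    Finset.card_eq_sum_card_fiberwise (fun v _ => hf1 v)
  have hfiber : ∀ e ∈ F, (Finset.univ.filter fun v => f v = e).card = 2 := by
    intro e he
    obtain ⟨x, y, rfl, hxy, _⟩ := pm_decomp hM (hMfin.mem_toFinset.1 he)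
    have : (Finset.univ.filter fun v => f v = s(x,y)) = {x, y} := by
      ext v
      simp only [Finset.mem_filter, Finset.mem_univ, true_and, Finset.mem_insert,
        Finset.mem_singleton]
      constructor
      · intro hv
        have := hf2 v
        rw [hv] at this
        exact Sym2.mem_iff.1 this
      · rintro (rfl | rfl)
        · exact pm_unique_edge hM (hMfin.mem_toFinset.1 (hf1 v)) (hMfin.mem_toFinset.1 he)
            (hf2 v) (Sym2.mem_mk_left _ _)
        · exact pm_unique_edge hM (hMfin.mem_toFinset.1 (hf1 v)) (hMfin.mem_toFinset.1 he)
            (hf2 v) (Sym2.mem_mk_right _ _)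
    rw [this, Finset.card_insert_of_notMem (by simpa using hxy), Finset.card_singleton]
  have : 2 * n = 2 * F.card := by
    rw [← hcard, ← Finset.card_univ, hcount, Finset.sum_congr rfl hfiber]
    simp [Finset.sum_const, mul_comm]
  have hcardF : F.card = n := by omega
  rw [Set.ncard_eq_toFinset_card' M] at *
  -- relate toFinset
  rw [← hcardF, hF]
  congr 1
  ext e; simp

lemma forcingNum_le_ncard (hM : IsPM G M) : forcingNum G M ≤ M.ncard :=
  Nat.sInf_le ⟨M, ⟨subset_rfl, fun M' hM' h => pm_superset hM hM' h⟩, rfl⟩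

lemma exists_max_pm [Fintype V] (hPM : ∃ M, IsPM G M) :
    ∃ M, IsPM G M ∧ forcingNum G M = maxForcing G := by
  have hfin : Finite (Sym2 V) := inferInstance
  have hmem : maxForcing G ∈ {k | ∃ M, IsPM G M ∧ forcingNum G M = k} := by
    apply Nat.sSup_mem
    · obtain ⟨M, hM⟩ := hPM
      exact ⟨forcingNum G M, M, hM, rfl⟩
    · refine ⟨Nat.card (Sym2 V), ?_⟩
      rintro k ⟨M, hM, rfl⟩
      calc forcingNum G M ≤ M.ncard := forcingNum_le_ncard hM
        _ ≤ (Set.univ : Set (Sym2 V)).ncard := Set.ncard_le_ncard (Set.subset_univ M) (Set.toFinite _)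
        _ = Nat.card (Sym2 V) := by rw [Set.ncard_univ]
  obtain ⟨M, hM, h⟩ := hmem
  exact ⟨M, hM, h⟩

lemma star_prop [Fintype V] {n : ℕ} (hn : 2 ≤ n) (hcard : Fintype.card V = 2 * n)
    (hM : IsPM G M) (hfn : forcingNum G M = n - 1) :
    ∀ a b c d : V, s(a,b) ∈ M → s(c,d) ∈ M → s(a,b) ≠ s(c,d) →
      (G.Adj a c ∧ G.Adj b d) ∨ (G.Adj a d ∧ G.Adj b c) := by
  intro a b c d he hf hef
  have hab : a ≠ b := ((SimpleGraph.mem_edgeSet G).mp (hM.1 he)).ne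
  have hcd : c ≠ d := ((SimpleGraph.mem_edgeSet G).mp (hM.1 hf)).ne
  have hdisj : ∀ v : V, v ∈ s(a,b) → v ∉ s(c,d) := hM.2.1 _ he _ hf hef
  have hac : a ≠ c := fun h => hdisj a (Sym2.mem_mk_left a b) (h ▸ Sym2.mem_mk_left c d)
  have had : a ≠ d := fun h => hdisj a (Sym2.mem_mk_left a b) (h ▸ Sym2.mem_mk_right c d)
  have hbc : b ≠ c := fun h => hdisj b (Sym2.mem_mk_right a b) (h ▸ Sym2.mem_mk_left c d)
  have hbd : b ≠ d := fun h => hdisj b (Sym2.mem_mk_right a b) (h ▸ Sym2.mem_mk_right c d)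
  set S : Set (Sym2 V) := M \ {s(a,b), s(c,d)} with hS
  have hSsub : S ⊆ M := Set.diff_subset
  have hpairsub : ({s(a,b), s(c,d)} : Set (Sym2 V)) ⊆ M := by
    intro g hg
    rcases Set.mem_insert_iff.1 hg with rfl | hg
    · exact he
    · rw [Set.mem_singleton_iff] at hg; exact hg ▸ hf
  have hSnc : S.ncard = n - 2 := by
    rw [hS, Set.ncard_diff hpairsub, pm_ncard hM hcard, Set.ncard_pair hef]
  have hnotf : ¬ IsForcingSet G M S := by
    intro hforce
    have : forcingNum G M ≤ n - 2 := Nat.sInf_le ⟨S, hforce, hSnc⟩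
    omega
  have hforce2 : ∃ M', IsPM G M' ∧ S ⊆ M' ∧ M' ≠ M := by
    by_contra hcon
    push_neg at hcon
    exact hnotf ⟨hSsub, fun M' h1 h2 => hcon M' h1 h2⟩
  obtain ⟨M', hM', hSM', hMne⟩ := hforce2
  have key : ∀ p x : V, p ∈ s(a,b) ∨ p ∈ s(c,d) → s(p,x) ∈ M' →
      x = a ∨ x = b ∨ x = c ∨ x = d := by
    intro p x hp hpx
    have hxS : ∀ h ∈ S, x ∉ h := by
      intro h hh hxh
      by_cases hhe : h = s(p,x)
      · have hpM : p ∈ h := hhe ▸ Sym2.mem_mk_left p x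
        have hhM : h ∈ M := hSsub hh
        rcases hp with hp | hp
        · exact hh.2 (by simp [pm_unique_edge hM hhM he hpM hp])
        · exact hh.2 (by simp [pm_unique_edge hM hhM hf hpM hp])
      · exact hM'.2.1 h (hSM' hh) s(p,x) hpx hhe x hxh (Sym2.mem_mk_right p x)
    obtain ⟨m, hm, hxm⟩ := hM.2.2 x
    have : m = s(a,b) ∨ m = s(c,d) := by
      by_contra hcon
      push_neg at hcon
      exact hxS m ⟨hm, by simp [hcon.1, hcon.2]⟩ hxm
    rcases this with rfl | rfl
    · rcases Sym2.mem_iff.1 hxm with rfl | rfl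
      · exact Or.inl rfl
      · exact Or.inr (Or.inl rfl)
    · rcases Sym2.mem_iff.1 hxm with rfl | rfl
      · exact Or.inr (Or.inr (Or.inl rfl))
      · exact Or.inr (Or.inr (Or.inr rfl))
  obtain ⟨x, hax, hanex, hadjax⟩ := pm_partner hM' a
  obtain ⟨y, hby, hbney, hadjby⟩ := pm_partner hM' b
  have hx4 : x = a ∨ x = b ∨ x = c ∨ x = d := key a x (Or.inl (Sym2.mem_mk_left a b)) hax
  have hy4 : y = a ∨ y = b ∨ y = c ∨ y = d := key b y (Or.inl (Sym2.mem_mk_right a b)) hby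
  by_cases hxb : x = b
  · -- s(a,b) ∈ M'; then the partner of c must be d, so M ⊆ M', contradiction
    exfalso
    rw [hxb] at hax
    obtain ⟨z, hcz, hcnez, _⟩ := pm_partner hM' c
    have hz4 : z = a ∨ z = b ∨ z = c ∨ z = d := key c z (Or.inr (Sym2.mem_mk_left c d)) hcz
    have hzd : z = d := by
      rcases hz4 with hz | hz | hz | hz
      · rw [hz] at hcz
        have := pm_unique_edge hM' hcz hax (Sym2.mem_mk_right c a) (Sym2.mem_mk_left a b)
        rw [Sym2.eq_iff] at this; tauto
      · rw [hz] at hcz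
        have := pm_unique_edge hM' hcz hax (Sym2.mem_mk_right c b) (Sym2.mem_mk_right a b)
        rw [Sym2.eq_iff] at this; tauto
      · exact absurd hz hcnez.symm
      · exact hz
    rw [hzd] at hcz
    have hMM' : M ⊆ M' := by
      intro g hg
      by_cases hgS : g ∈ S
      · exact hSM' hgS
      · have : g = s(a,b) ∨ g = s(c,d) := by
          by_contra hcon
          push_neg at hcon
          exact hgS ⟨hg, by simp [hcon.1, hcon.2]⟩
        rcases this with rfl | rfl
        · exact hax
        · exact hcz
    exact hMne (pm_superset hM hM' hMM')
  · -- x = c or x = d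
    have hya : y ≠ a := by
      intro hya
      rw [hya] at hby
      have := pm_unique_edge hM' hby hax (Sym2.mem_mk_right b a) (Sym2.mem_mk_left a x)
      rw [Sym2.eq_iff] at this
      rcases this with ⟨h1, _⟩ | ⟨h1, _⟩
      · exact hab h1.symm
      · exact hxb h1.symm
    rcases hx4 with hx | hx | hx | hx
    · exact absurd hx hanex.symm
    · exact absurd hx hxb
    · -- x = c : Adj a c; show y = d
      have hyd : y = d := by
        rcases hy4 with hy | hy | hy | hy
        · exact absurd hy hya
        · exact absurd hy hbney.symm
        · exfalso
          rw [hy] at hby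
          rw [hx] at hax
          have := pm_unique_edge hM' hby hax (Sym2.mem_mk_right b c) (Sym2.mem_mk_right a c)
          rw [Sym2.eq_iff] at this; tauto
        · exact hy
      rw [hx] at hadjax; rw [hyd] at hadjby
      exact Or.inl ⟨hadjax, hadjby⟩
    · -- x = d : Adj a d; show y = c
      have hyc : y = c := by
        rcases hy4 with hy | hy | hy | hy
        · exact absurd hy hya
        · exact absurd hy hbney.symm
        · exact hy
        · exfalso
          rw [hy] at hby
          rw [hx] at hax
          have := pm_unique_edge hM' hby hax (Sym2.mem_mk_right b d) (Sym2.mem_mk_right a d)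
          rw [Sym2.eq_iff] at this; tauto
      rw [hx] at hadjax; rw [hyc] at hadjby
      exact Or.inr ⟨hadjax, hadjby⟩

def edgeVerts {V : Type*} (S : Set (Sym2 V)) : Set V := {w | ∃ e ∈ S, w ∈ e}

lemma edgeVerts_sing (a b : V) : edgeVerts ({s(a,b)} : Set (Sym2 V)) = {a, b} := by
  ext w; simp [edgeVerts, Sym2.mem_iff]

lemma edgeVerts_ins (a b : V) (S : Set (Sym2 V)) :
    edgeVerts (insert s(a,b) S) = {a, b} ∪ edgeVerts S := by
  ext w
  simp only [edgeVerts, Set.mem_setOf_eq, Set.mem_insert_iff, Set.mem_union,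
    Set.mem_singleton_iff]
  constructor
  · rintro ⟨e, (rfl | he), hwe⟩
    · rcases Sym2.mem_iff.1 hwe with rfl | rfl
      · exact Or.inl (Or.inl rfl)
      · exact Or.inl (Or.inr rfl)
    · exact Or.inr ⟨e, he, hwe⟩
  · rintro ((rfl | rfl) | ⟨e, he, hwe⟩)
    · exact ⟨s(w,b), Or.inl rfl, Sym2.mem_mk_left w b⟩
    · exact ⟨s(a,w), Or.inl rfl, Sym2.mem_mk_right a w⟩
    · exact ⟨e, Or.inr he, hwe⟩

lemma sym2_disj {V : Type*} {a b c d : V} (h1 : a ≠ c) (h2 : a ≠ d) (h3 : b ≠ c) (h4 : b ≠ d)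
    (w : V) (hw : w ∈ s(a,b)) (hw2 : w ∈ s(c,d)) : False := by
  rcases Sym2.mem_iff.1 hw with rfl | rfl <;> rcases Sym2.mem_iff.1 hw2 with h | h <;> tauto

lemma pm_vertex_ne (hM : IsPM G M) {e f : Sym2 V} (he : e ∈ M) (hf : f ∈ M) (hef : e ≠ f)
    {x y : V} (hx : x ∈ e) (hy : y ∈ f) : x ≠ y := by
  rintro rfl
  exact hM.2.1 e he f hf hef x hx hy

lemma buildPMOn (hM : IsPM G M) {u v : V} {D E' : Set (Sym2 V)}
    (hD : D ⊆ M) (hE : E' ⊆ G.edgeSet)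
    (hEd : ∀ e ∈ E', ∀ f ∈ E', e ≠ f → ∀ w : V, w ∈ e → w ∉ f)
    (hVS : edgeVerts E' = edgeVerts D \ {u, v})
    (hu : u ∈ edgeVerts D) (hv : v ∈ edgeVerts D) :
    IsPMOn G ({u,v}ᶜ : Set V) ((M \ D) ∪ E') := by
  constructor
  · -- edges
    intro e he
    rcases he with he | he
    · exact hM.1 he.1
    · exact hE he
  refine ⟨?_, ?_, ?_⟩
  · -- vertices avoid u,v
    intro e he w hwe
    simp only [Set.mem_compl_iff, Set.mem_insert_iff, Set.mem_singleton_iff]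
    rintro (rfl | rfl)
    · rcases he with he | he
      · obtain ⟨d, hd, hwd⟩ := hu
        exact hM.2.1 d (hD hd) e he.1 (fun h => he.2 (h ▸ hd)) w hwd hwe
      · have : w ∈ edgeVerts E' := ⟨e, he, hwe⟩
        rw [hVS] at this
        exact this.2 (Or.inl rfl)
    · rcases he with he | he
      · obtain ⟨d, hd, hwd⟩ := hv
        exact hM.2.1 d (hD hd) e he.1 (fun h => he.2 (h ▸ hd)) w hwd hwe
      · have : w ∈ edgeVerts E' := ⟨e, he, hwe⟩
        rw [hVS] at this
        exact this.2 (Or.inr rfl)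
  · -- pairwise disjoint
    intro e he f hf hef w hwe hwf
    rcases he with he | he <;> rcases hf with hf | hf
    · exact hM.2.1 e he.1 f hf.1 hef w hwe hwf
    · -- e old, f new
      have : w ∈ edgeVerts E' := ⟨f, hf, hwf⟩
      rw [hVS] at this
      obtain ⟨⟨d, hd, hwd⟩, _⟩ := this
      exact hM.2.1 d (hD hd) e he.1 (fun h => he.2 (h ▸ hd)) w hwd hwe
    · have : w ∈ edgeVerts E' := ⟨e, he, hwe⟩
      rw [hVS] at this
      obtain ⟨⟨d, hd, hwd⟩, _⟩ := this
      exact hM.2.1 d (hD hd) f hf.1 (fun h => hf.2 (h ▸ hd)) w hwd hwf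
    · exact hEd e he f hf hef w hwe hwf
  · -- covering
    intro w hw
    obtain ⟨e, he, hwe⟩ := hM.2.2 w
    by_cases heD : e ∈ D
    · have : w ∈ edgeVerts D \ {u, v} := by
        refine ⟨⟨e, heD, hwe⟩, ?_⟩
        simpa [Set.mem_insert_iff] using hw
      rw [← hVS] at this
      obtain ⟨f, hf, hwf⟩ := this
      exact ⟨f, Or.inr hf, hwf⟩
    · exact ⟨e, Or.inl ⟨he, heD⟩, hwe⟩

lemma core_pmOn [Fintype V] {n : ℕ} (hn : 2 ≤ n) (hcard : Fintype.card V = 2 * n)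
    (hM : IsPM G M)
    (hstar : ∀ a b c d : V, s(a,b) ∈ M → s(c,d) ∈ M → s(a,b) ≠ s(c,d) →
      (G.Adj a c ∧ G.Adj b d) ∨ (G.Adj a d ∧ G.Adj b c))
    (hind : ¬ ∃ A : Set V, A.ncard = n ∧ ∀ a ∈ A, ∀ b ∈ A, ¬ G.Adj a b)
    (u v : V) (huv : u ≠ v) : ∃ N, IsPMOn G ({u,v}ᶜ : Set V) N := by
  classical
  obtain ⟨u', heu, huu', hadjuu'⟩ := pm_partner hM u
  obtain ⟨v', hev, hvv', hadjvv'⟩ := pm_partner hM v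
  by_cases hsame : s(u,u') = s(v,v')
  · -- v = u'
    have hvu' : v = u' := by
      have : v ∈ s(u,u') := hsame ▸ Sym2.mem_mk_left v v'
      rcases Sym2.mem_iff.1 this with h | h
      · exact absurd h huv.symm
      · exact h
    refine ⟨(M \ {s(u,u')}) ∪ ∅, buildPMOn hM (by simpa using heu) (by simp)
      (by simp) ?_ ⟨s(u,u'), rfl, Sym2.mem_mk_left u u'⟩
      ⟨s(u,u'), rfl, hvu' ▸ Sym2.mem_mk_right u u'⟩⟩
    subst hvu'
    rw [edgeVerts_sing]
    ext w
    simp only [edgeVerts, Set.mem_setOf_eq, Set.mem_empty_iff_false, Set.mem_diff,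
      Set.mem_insert_iff, Set.mem_singleton_iff, Set.mem_union]
    constructor
    · rintro ⟨e, he, _⟩; exact absurd he (Set.notMem_empty e)
    · rintro ⟨h1, h2⟩; push_neg at h2; tauto
  · -- distinct edges
    have hne := hsame
    have huv' : u ≠ v' := pm_vertex_ne hM heu hev hne (Sym2.mem_mk_left u u') (Sym2.mem_mk_right v v')
    have hu'v : u' ≠ v := pm_vertex_ne hM heu hev hne (Sym2.mem_mk_right u u') (Sym2.mem_mk_left v v')
    have hu'v' : u' ≠ v' := pm_vertex_ne hM heu hev hne (Sym2.mem_mk_right u u') (Sym2.mem_mk_right v v')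
    by_cases hAdj : G.Adj u' v'
    · -- direct replacement
      refine ⟨(M \ {s(u,u'), s(v,v')}) ∪ {s(u',v')}, buildPMOn hM ?_ ?_ ?_ ?_ ?_ ?_⟩
      · rintro g (rfl | hg)
        · exact heu
        · rw [Set.mem_singleton_iff] at hg; exact hg ▸ hev
      · intro g hg
        rw [Set.mem_singleton_iff] at hg
        exact hg ▸ (SimpleGraph.mem_edgeSet G).mpr hAdj
      · intro e he f hf hef w hwe hwf
        rw [Set.mem_singleton_iff] at he hf
        exact absurd (he.trans hf.symm) hef
      · rw [edgeVerts_sing, edgeVerts_ins, edgeVerts_sing]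
        ext w
        simp only [Set.mem_insert_iff, Set.mem_singleton_iff, Set.mem_union, Set.mem_diff]
        constructor
        · rintro (rfl | rfl)
          · exact ⟨Or.inl (Or.inr rfl), by push_neg; exact ⟨huu'.symm, hu'v⟩⟩
          · exact ⟨Or.inr (Or.inr rfl), by push_neg; exact ⟨huv'.symm, hvv'.symm⟩⟩
        · rintro ⟨(h | h) | (h | h), hw⟩ <;> push_neg at hw <;>
            first
            | (subst h; exact absurd rfl hw.1)
            | (subst h; exact absurd rfl hw.2)
            | (subst h; exact Or.inl rfl)
            | (subst h; exact Or.inr rfl)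
      · exact ⟨s(u,u'), Or.inl rfl, Sym2.mem_mk_left u u'⟩
      · exact ⟨s(v,v'), Or.inr rfl, Sym2.mem_mk_left v v'⟩
    · -- ¬ Adj u' v'
      by_cases h3 : ∃ x y : V, s(x,y) ∈ M ∧ s(x,y) ≠ s(u,u') ∧ s(x,y) ≠ s(v,v') ∧
          G.Adj u' x ∧ G.Adj v' y
      · obtain ⟨x, y, hg, hg1, hg2, hux, hvy⟩ := h3
        have hxy : x ≠ y := ((SimpleGraph.mem_edgeSet G).mp (hM.1 hg)).ne
        have hxu : x ≠ u := pm_vertex_ne hM hg heu hg1 (Sym2.mem_mk_left x y) (Sym2.mem_mk_left u u')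
        have hxu' : x ≠ u' := pm_vertex_ne hM hg heu hg1 (Sym2.mem_mk_left x y) (Sym2.mem_mk_right u u')
        have hxv : x ≠ v := pm_vertex_ne hM hg hev hg2 (Sym2.mem_mk_left x y) (Sym2.mem_mk_left v v')
        have hxv' : x ≠ v' := pm_vertex_ne hM hg hev hg2 (Sym2.mem_mk_left x y) (Sym2.mem_mk_right v v')
        have hyu : y ≠ u := pm_vertex_ne hM hg heu hg1 (Sym2.mem_mk_right x y) (Sym2.mem_mk_left u u')
        have hyu' : y ≠ u' := pm_vertex_ne hM hg heu hg1 (Sym2.mem_mk_right x y) (Sym2.mem_mk_right u u')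
        have hyv : y ≠ v := pm_vertex_ne hM hg hev hg2 (Sym2.mem_mk_right x y) (Sym2.mem_mk_left v v')
        have hyv' : y ≠ v' := pm_vertex_ne hM hg hev hg2 (Sym2.mem_mk_right x y) (Sym2.mem_mk_right v v')
        refine ⟨(M \ {s(u,u'), s(v,v'), s(x,y)}) ∪ {s(u',x), s(v',y)}, buildPMOn hM ?_ ?_ ?_ ?_ ?_ ?_⟩
        · rintro g (rfl | rfl | hgm)
          · exact heu
          · exact hev
          · rw [Set.mem_singleton_iff] at hgm; exact hgm ▸ hg
        · rintro g (rfl | hgm)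
          · exact (SimpleGraph.mem_edgeSet G).mpr hux
          · rw [Set.mem_singleton_iff] at hgm; exact hgm ▸ (SimpleGraph.mem_edgeSet G).mpr hvy
        · intro e he f hf hef w hwe hwf
          rcases he with rfl | he <;> rcases hf with rfl | hf
          · exact hef rfl
          · rw [Set.mem_singleton_iff] at hf; subst hf
            rcases Sym2.mem_iff.1 hwe with rfl | rfl <;> rcases Sym2.mem_iff.1 hwf with h | h
            · exact hu'v' h
            · exact (hyu' h.symm)
            · exact hxv' h
            · exact hxy h
          · rw [Set.mem_singleton_iff] at he; subst he
            rcases Sym2.mem_iff.1 hwe with rfl | rfl <;> rcases Sym2.mem_iff.1 hwf with h | h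
            · exact hu'v' h.symm
            · exact hxv' h.symm
            · exact hyu' h
            · exact hxy h.symm
          · rw [Set.mem_singleton_iff] at he hf; exact absurd (he.trans hf.symm) hef
        · rw [edgeVerts_ins, edgeVerts_sing, edgeVerts_ins, edgeVerts_ins, edgeVerts_sing]
          ext w
          simp only [Set.mem_insert_iff, Set.mem_singleton_iff, Set.mem_union, Set.mem_diff]
          constructor
          · rintro ((rfl | rfl) | (rfl | rfl))
            · exact ⟨Or.inl (Or.inr rfl), by push_neg; exact ⟨huu'.symm, hu'v⟩⟩
            · exact ⟨Or.inr (Or.inr (Or.inl rfl)), by push_neg; exact ⟨hxu, hxv⟩⟩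
            · exact ⟨Or.inr (Or.inl (Or.inr rfl)), by push_neg; exact ⟨huv'.symm, hvv'.symm⟩⟩
            · exact ⟨Or.inr (Or.inr (Or.inr rfl)), by push_neg; exact ⟨hyu, hyv⟩⟩
          · rintro ⟨((h | h) | (h | h) | (h | h)), hw⟩ <;> push_neg at hw <;> subst h
            · exact absurd rfl hw.1
            · exact Or.inl (Or.inl rfl)
            · exact absurd rfl hw.2
            · exact Or.inr (Or.inl rfl)
            · exact Or.inl (Or.inr rfl)
            · exact Or.inr (Or.inr rfl)
        · exact ⟨s(u,u'), Or.inl rfl, Sym2.mem_mk_left u u'⟩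
        · exact ⟨s(v,v'), Or.inr (Or.inl rfl), Sym2.mem_mk_left v v'⟩
      · -- no third edge with a cross pair
        push_neg at h3
        have pkg : ∀ g ∈ M, g ≠ s(u,u') → g ≠ s(v,v') →
            ∃ w z : V, g = s(w,z) ∧ ¬G.Adj u' w ∧ ¬G.Adj v' w ∧ G.Adj u' z ∧ G.Adj v' z := by
          intro g hgM hg1 hg2
          obtain ⟨x, y, rfl, hxy, hadj⟩ := pm_decomp hM hgM
          have hswap : s(y,x) ∈ M := by rwa [Sym2.eq_swap]
          have hswap1 : s(y,x) ≠ s(u,u') := by rwa [Sym2.eq_swap]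
          have hswap2 : s(y,x) ≠ s(v,v') := by rwa [Sym2.eq_swap]
          have hstar1 := hstar u' u x y (by rwa [Sym2.eq_swap]) hgM
            (fun h => hg1 (h.symm.trans (Sym2.eq_swap)))
          have hstar2 := hstar v' v x y (by rwa [Sym2.eq_swap]) hgM
            (fun h => hg2 (h.symm.trans (Sym2.eq_swap)))
          have hu'xy : G.Adj u' x ∨ G.Adj u' y := by tauto
          have hv'xy : G.Adj v' x ∨ G.Adj v' y := by tauto
          have h3xy := h3 x y hgM hg1 hg2
          have h3yx := h3 y x hswap hswap1 hswap2
          rcases hu'xy with h | h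
          · have hnv'y : ¬ G.Adj v' y := h3xy h
            have hv'x : G.Adj v' x := by tauto
            have hnu'y : ¬ G.Adj u' y := fun h' => (h3yx h') hv'x
            exact ⟨y, x, Sym2.eq_swap.symm, hnu'y, hnv'y, h, hv'x⟩
          · have hnv'x : ¬ G.Adj v' x := fun h' => (h3yx h) h'
            have hv'y : G.Adj v' y := by tauto
            have hnu'x : ¬ G.Adj u' x := fun h' => (h3xy h') hv'y
            exact ⟨x, y, rfl, hnu'x, hnv'x, h, hv'y⟩
        by_cases h4 : ∃ g ∈ M, ∃ g' ∈ M, g ≠ s(u,u') ∧ g ≠ s(v,v') ∧ g' ≠ s(u,u') ∧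
            g' ≠ s(v,v') ∧ g ≠ g' ∧ ∃ w w' : V, w ∈ g ∧ w' ∈ g' ∧ ¬G.Adj u' w ∧ ¬G.Adj v' w ∧
            ¬G.Adj u' w' ∧ ¬G.Adj v' w' ∧ G.Adj w w'
        · obtain ⟨g, hgM, g', hg'M, hg1, hg2, hg'1, hg'2, hgg', w, w', hwg, hw'g', hnuw, hnvw,
            hnuw', hnvw', hadjww'⟩ := h4
          obtain ⟨w0, z, hgeq, hnu0, hnv0, huz, hvz⟩ := pkg g hgM hg1 hg2
          obtain ⟨w0', z', hgeq', hnu0', hnv0', huz', hvz'⟩ := pkg g' hg'M hg'1 hg'2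
          have hww0 : w = w0 := by
            rw [hgeq] at hwg
            rcases Sym2.mem_iff.1 hwg with h | h
            · exact h
            · exact absurd (h ▸ huz) hnuw
          have hww0' : w' = w0' := by
            rw [hgeq'] at hw'g'
            rcases Sym2.mem_iff.1 hw'g' with h | h
            · exact h
            · exact absurd (h ▸ huz') hnuw'
          subst hww0; subst hww0'
          -- all eight vertices distinct
          have hmw : (w : V) ∈ g := hgeq ▸ Sym2.mem_mk_left w z
          have hmz : (z : V) ∈ g := hgeq ▸ Sym2.mem_mk_right w z
          have hmw' : (w' : V) ∈ g' := hgeq' ▸ Sym2.mem_mk_left w' z'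
          have hmz' : (z' : V) ∈ g' := hgeq' ▸ Sym2.mem_mk_right w' z'
          have hwz : w ≠ z := by
            intro h; rw [h] at hnu0; exact hnu0 huz
          have hwz' : w' ≠ z' := by
            intro h; rw [h] at hnu0'; exact hnu0' huz'
          have hwu : w ≠ u := pm_vertex_ne hM hgM heu hg1 hmw (Sym2.mem_mk_left u u')
          have hwu' : w ≠ u' := pm_vertex_ne hM hgM heu hg1 hmw (Sym2.mem_mk_right u u')
          have hwv : w ≠ v := pm_vertex_ne hM hgM hev hg2 hmw (Sym2.mem_mk_left v v')
          have hwv' : w ≠ v' := pm_vertex_ne hM hgM hev hg2 hmw (Sym2.mem_mk_right v v')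
          have hzu : z ≠ u := pm_vertex_ne hM hgM heu hg1 hmz (Sym2.mem_mk_left u u')
          have hzu' : z ≠ u' := pm_vertex_ne hM hgM heu hg1 hmz (Sym2.mem_mk_right u u')
          have hzv : z ≠ v := pm_vertex_ne hM hgM hev hg2 hmz (Sym2.mem_mk_left v v')
          have hzv' : z ≠ v' := pm_vertex_ne hM hgM hev hg2 hmz (Sym2.mem_mk_right v v')
          have hw'u : w' ≠ u := pm_vertex_ne hM hg'M heu hg'1 hmw' (Sym2.mem_mk_left u u')
          have hw'u' : w' ≠ u' := pm_vertex_ne hM hg'M heu hg'1 hmw' (Sym2.mem_mk_right u u')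
          have hw'v : w' ≠ v := pm_vertex_ne hM hg'M hev hg'2 hmw' (Sym2.mem_mk_left v v')
          have hw'v' : w' ≠ v' := pm_vertex_ne hM hg'M hev hg'2 hmw' (Sym2.mem_mk_right v v')
          have hz'u : z' ≠ u := pm_vertex_ne hM hg'M heu hg'1 hmz' (Sym2.mem_mk_left u u')
          have hz'u' : z' ≠ u' := pm_vertex_ne hM hg'M heu hg'1 hmz' (Sym2.mem_mk_right u u')
          have hz'v : z' ≠ v := pm_vertex_ne hM hg'M hev hg'2 hmz' (Sym2.mem_mk_left v v')
          have hz'v' : z' ≠ v' := pm_vertex_ne hM hg'M hev hg'2 hmz' (Sym2.mem_mk_right v v')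
          have hwwp : w ≠ w' := pm_vertex_ne hM hgM hg'M hgg' hmw hmw'
          have hwzp : w ≠ z' := pm_vertex_ne hM hgM hg'M hgg' hmw hmz'
          have hzwp : z ≠ w' := pm_vertex_ne hM hgM hg'M hgg' hmz hmw'
          have hzzp : z ≠ z' := pm_vertex_ne hM hgM hg'M hgg' hmz hmz'
          refine ⟨(M \ {s(u,u'), s(v,v'), g, g'}) ∪ {s(u',z), s(v',z'), s(w,w')},
            buildPMOn hM ?_ ?_ ?_ ?_ ?_ ?_⟩
          · rintro e (rfl | rfl | rfl | he)
            · exact heu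
            · exact hev
            · exact hgM
            · rw [Set.mem_singleton_iff] at he; exact he ▸ hg'M
          · rintro e (rfl | rfl | he)
            · exact (SimpleGraph.mem_edgeSet G).mpr huz
            · exact (SimpleGraph.mem_edgeSet G).mpr hvz'
            · rw [Set.mem_singleton_iff] at he; exact he ▸ (SimpleGraph.mem_edgeSet G).mpr hadjww'
          · intro e he f hf hef x hxe hxf
            rcases he with rfl | rfl | he
            · rcases hf with rfl | rfl | hf
              · exact absurd rfl hef
              · exact sym2_disj hu'v' (fun h => hz'u' h.symm) hzv' hzzp x hxe hxf
              · rw [Set.mem_singleton_iff] at hf; subst hf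
                exact sym2_disj (fun h => hwu' h.symm) (fun h => hw'u' h.symm)
                  (fun h => hwz h.symm) hzwp x hxe hxf
            · rcases hf with rfl | rfl | hf
              · exact sym2_disj hu'v'.symm (fun h => hzv' h.symm) hz'u' (fun h => hzzp h.symm) x hxe hxf
              · exact absurd rfl hef
              · rw [Set.mem_singleton_iff] at hf; subst hf
                exact sym2_disj (fun h => hwv' h.symm) (fun h => hw'v' h.symm)
                  (fun h => hwzp h.symm) (fun h => hwz' h.symm) x hxe hxf
            · rw [Set.mem_singleton_iff] at he; subst he
              rcases hf with rfl | rfl | hf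
              · exact sym2_disj hwu' hwz hw'u' (fun h => hzwp h.symm) x hxe hxf
              · exact sym2_disj hwv' hwzp hw'v' hwz' x hxe hxf
              · rw [Set.mem_singleton_iff] at hf; subst hf
                exact absurd rfl hef
          · rw [hgeq, hgeq']
            rw [edgeVerts_ins, edgeVerts_ins, edgeVerts_sing,
              edgeVerts_ins, edgeVerts_ins, edgeVerts_ins, edgeVerts_sing]
            ext x
            simp only [Set.mem_insert_iff, Set.mem_singleton_iff, Set.mem_union, Set.mem_diff]
            constructor
            · rintro ((rfl | rfl) | (rfl | rfl) | (rfl | rfl))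
              · exact ⟨Or.inl (Or.inr rfl), by push_neg; exact ⟨huu'.symm, hu'v⟩⟩
              · exact ⟨Or.inr (Or.inr (Or.inl (Or.inr rfl))), by push_neg; exact ⟨hzu, hzv⟩⟩
              · exact ⟨Or.inr (Or.inl (Or.inr rfl)), by push_neg; exact ⟨huv'.symm, hvv'.symm⟩⟩
              · exact ⟨Or.inr (Or.inr (Or.inr (Or.inr rfl))), by push_neg; exact ⟨hz'u, hz'v⟩⟩
              · exact ⟨Or.inr (Or.inr (Or.inl (Or.inl rfl))), by push_neg; exact ⟨hwu, hwv⟩⟩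
              · exact ⟨Or.inr (Or.inr (Or.inr (Or.inl rfl))), by push_neg; exact ⟨hw'u, hw'v⟩⟩
            · rintro ⟨((h | h) | (h | h) | (h | h) | (h | h)), hw2⟩ <;> push_neg at hw2 <;> subst h
              · exact absurd rfl hw2.1
              · exact Or.inl (Or.inl rfl)
              · exact absurd rfl hw2.2
              · exact Or.inr (Or.inl (Or.inl rfl))
              · exact Or.inr (Or.inr (Or.inl rfl))
              · exact Or.inl (Or.inr rfl)
              · exact Or.inr (Or.inr (Or.inr rfl))
              · exact Or.inr (Or.inl (Or.inr rfl))
          · exact ⟨s(u,u'), Or.inl rfl, Sym2.mem_mk_left u u'⟩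
          · exact ⟨s(v,v'), Or.inr (Or.inl rfl), Sym2.mem_mk_left v v'⟩
        · -- independent set of size n: contradiction
          exfalso
          push_neg at h4
          set F : Sym2 V → V := fun g =>
            if g = s(u,u') then u' else if g = s(v,v') then v'
            else if h : ∃ w : V, w ∈ g ∧ ¬G.Adj u' w ∧ ¬G.Adj v' w then h.choose else u with hF
          have hFeu : F s(u,u') = u' := by rw [hF]; simp
          have hFev : F s(v,v') = v' := by rw [hF]; simp [Ne.symm hne]
          have hFother : ∀ g ∈ M, g ≠ s(u,u') → g ≠ s(v,v') →
              F g ∈ g ∧ ¬G.Adj u' (F g) ∧ ¬G.Adj v' (F g) := by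
            intro g hgM hg1 hg2
            obtain ⟨w, z, hgeq, hnu0, hnv0, huz, hvz⟩ := pkg g hgM hg1 hg2
            have hex : ∃ w : V, w ∈ g ∧ ¬G.Adj u' w ∧ ¬G.Adj v' w :=
              ⟨w, hgeq ▸ Sym2.mem_mk_left w z, hnu0, hnv0⟩
            have : F g = hex.choose := by rw [hF]; simp [hg1, hg2, hex]
            rw [this]
            exact hex.choose_spec
          have hFmem : ∀ g ∈ M, F g ∈ g := by
            intro g hgM
            by_cases hg1 : g = s(u,u')
            · subst hg1; rw [hFeu]; exact Sym2.mem_mk_right u u'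
            · by_cases hg2 : g = s(v,v')
              · subst hg2; rw [hFev]; exact Sym2.mem_mk_right v v'
              · exact (hFother g hgM hg1 hg2).1
          have hinj : Set.InjOn F M := by
            intro g hg g' hg' hFgg'
            by_contra hne2
            exact hM.2.1 g hg g' hg' hne2 (F g) (hFmem g hg) (hFgg' ▸ hFmem g' hg')
          apply hind
          refine ⟨F '' M, ?_, ?_⟩
          · rw [Set.ncard_image_of_injOn hinj, pm_ncard hM hcard]
          · rintro a ⟨g, hgM, rfl⟩ b ⟨g', hg'M, rfl⟩
            by_cases hgg' : g = g'
            · subst hgg'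
              exact G.irrefl
            · by_cases hg1 : g = s(u,u')
              · subst hg1
                rw [hFeu]
                by_cases hg'1 : g' = s(u,u')
                · exact absurd hg'1.symm hgg'
                · by_cases hg'2 : g' = s(v,v')
                  · subst hg'2; rw [hFev]; exact hAdj
                  · exact (hFother g' hg'M hg'1 hg'2).2.1
              · by_cases hg2 : g = s(v,v')
                · subst hg2
                  rw [hFev]
                  by_cases hg'1 : g' = s(u,u')
                  · subst hg'1; rw [hFeu]; exact fun h => hAdj h.symm
                  · by_cases hg'2 : g' = s(v,v')
                    · exact absurd hg'2.symm hgg'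
                    · exact (hFother g' hg'M hg'1 hg'2).2.2
                · have hFg := hFother g hgM hg1 hg2
                  by_cases hg'1 : g' = s(u,u')
                  · subst hg'1; rw [hFeu]; exact fun h => hFg.2.1 h.symm
                  · by_cases hg'2 : g' = s(v,v')
                    · subst hg'2; rw [hFev]; exact fun h => hFg.2.2 h.symm
                    · have hFg' := hFother g' hg'M hg'1 hg'2
                      exact h4 g hgM g' hg'M hg1 hg2 hg'1 hg'2 hgg' (F g) (F g')
                        (hFmem g hgM) (hFmem g' hg'M) hFg.2.1 hFg.2.2 hFg'.2.1 hFg'.2.2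

lemma pmOn_decomp {T : Set V} {N : Set (Sym2 V)} (hN : IsPMOn G T N) {e : Sym2 V} (he : e ∈ N) :
    ∃ x y : V, e = s(x,y) ∧ x ≠ y ∧ G.Adj x y ∧ x ∈ T ∧ y ∈ T := by
  induction e using Sym2.ind with
  | _ x y =>
    have hadj : G.Adj x y := (SimpleGraph.mem_edgeSet G).mp (hN.1 he)
    exact ⟨x, y, rfl, hadj.ne, hadj, hN.2.1 _ he x (Sym2.mem_mk_left x y),
      hN.2.1 _ he y (Sym2.mem_mk_right x y)⟩

/-- Convert a PM on an induced vertex set to a PM of the induced subgraph. -/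
lemma pmOn_to_induce {T : Set V} {N : Set (Sym2 V)} (hN : IsPMOn G T N) :
    ∃ M, IsPM (G.induce T) M := by
  classical
  refine ⟨{e : Sym2 ↥T | e.map Subtype.val ∈ N}, ?_, ?_, ?_⟩
  · intro e he
    induction e using Sym2.ind with
    | _ x y =>
      have : s((x : V), (y : V)) ∈ N := he
      have hadj : G.Adj x y := (SimpleGraph.mem_edgeSet G).mp (hN.1 this)
      exact (SimpleGraph.mem_edgeSet _).mpr (by simpa [SimpleGraph.comap] using hadj)
  · intro e he f hf hef w hwe hwf
    have hmapne : e.map (Subtype.val) ≠ f.map (Subtype.val) := by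
      intro h
      exact hef (Sym2.map.injective Subtype.val_injective h)
    have h1 : (w : V) ∈ e.map (Subtype.val) := Sym2.mem_map.mpr ⟨w, hwe, rfl⟩
    have h2 : (w : V) ∈ f.map (Subtype.val) := Sym2.mem_map.mpr ⟨w, hwf, rfl⟩
    exact hN.2.2.1 _ he _ hf hmapne (w : V) h1 h2
  · intro w
    obtain ⟨e, he, hwe⟩ := hN.2.2.2 (w : V) w.2
    obtain ⟨x, y, rfl, hxy, hadj, hxT, hyT⟩ := pmOn_decomp hN he
    refine ⟨s((⟨x, hxT⟩ : T), (⟨y, hyT⟩ : T)), by simpa using he, ?_⟩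
    rcases Sym2.mem_iff.1 hwe with h | h
    · exact Sym2.mem_iff.2 (Or.inl (Subtype.ext h))
    · exact Sym2.mem_iff.2 (Or.inr (Subtype.ext h))

/-- A PM on `{u,v}ᶜ` plus the edge `s(u,v)` is a PM of `G`. -/
lemma pmOn_union_edge {u v : V} {N : Set (Sym2 V)} (hN : IsPMOn G ({u,v}ᶜ : Set V) N)
    (huv : G.Adj u v) : IsPM G (N ∪ {s(u,v)}) := by
  have hmemuv : ∀ w : V, w ∈ s(u,v) ↔ (w = u ∨ w = v) := fun w => Sym2.mem_iff
  refine ⟨?_, ?_, ?_⟩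
  · rintro e (he | he)
    · exact hN.1 he
    · rw [Set.mem_singleton_iff] at he
      exact he ▸ (SimpleGraph.mem_edgeSet G).mpr huv
  · rintro e (he | he) f (hf | hf) hef w hwe hwf
    · exact hN.2.2.1 _ he _ hf hef w hwe hwf
    · rw [Set.mem_singleton_iff] at hf
      subst hf
      have := hN.2.1 _ he w hwe
      rcases (hmemuv w).1 hwf with rfl | rfl <;> simp at this
    · rw [Set.mem_singleton_iff] at he
      subst he
      have := hN.2.1 _ hf w hwf
      rcases (hmemuv w).1 hwe with rfl | rfl <;> simp at this
    · rw [Set.mem_singleton_iff] at he hf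
      exact absurd (he.trans hf.symm) hef
  · intro w
    by_cases hw : w = u ∨ w = v
    · exact ⟨s(u,v), Or.inr rfl, (hmemuv w).2 hw⟩
    · have : w ∈ ({u,v}ᶜ : Set V) := by
        simp only [Set.mem_compl_iff, Set.mem_insert_iff, Set.mem_singleton_iff]
        exact hw
      obtain ⟨e, he, hwe⟩ := hN.2.2.2 w this
      exact ⟨e, Or.inl he, hwe⟩

lemma induce_adj_of_adj {T : Set V} {x y : ↥T} (h : G.Adj (x : V) (y : V)) :
    (G.induce T).Adj x y := by
  simp only [SimpleGraph.comap_adj, Function.Embedding.coe_subtype, SimpleGraph.induce]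
  exact h

lemma conn_aux [Fintype V] {n : ℕ} (hn : 2 ≤ n) (hcard : Fintype.card V = 2 * n)
    (hM : IsPM G M)
    (hstar : ∀ a b c d : V, s(a,b) ∈ M → s(c,d) ∈ M → s(a,b) ≠ s(c,d) →
      (G.Adj a c ∧ G.Adj b d) ∨ (G.Adj a d ∧ G.Adj b c))
    (hind : ¬ ∃ A : Set V, A.ncard = n ∧ ∀ a ∈ A, ∀ b ∈ A, ¬ G.Adj a b)
    (X : Set V) (hX : X.ncard ≤ 2) : (G.induce Xᶜ).Connected := by
  classical
  have hcompl : X.ncard + Xᶜ.ncard = 2 * n := by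
    rw [Set.ncard_add_ncard_compl, Nat.card_eq_fintype_card, hcard]
  have hXc2 : 2 ≤ Xᶜ.ncard := by omega
  have hnonempty : Nonempty ↥Xᶜ := by
    have : Xᶜ.Nonempty := Set.nonempty_of_ncard_ne_zero (by omega)
    exact this.to_subtype
  constructor
  rcases Nat.lt_or_ge n 3 with hn3 | hn3
  · -- n = 2 : G is complete
    have hcomp : ∀ a b : V, a ≠ b → G.Adj a b := by
      intro a b hab
      by_contra hadj
      apply hind
      refine ⟨{a, b}, by rw [Set.ncard_pair hab]; omega, ?_⟩
      rintro p (rfl | rfl) q (rfl | rfl)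
      · exact G.irrefl
      · exact hadj
      · exact fun h => hadj h.symm
      · exact G.irrefl
    intro x y
    by_cases hxy : x = y
    · exact hxy ▸ SimpleGraph.Reachable.refl x
    · exact (induce_adj_of_adj (hcomp _ _ (fun h => hxy (Subtype.ext h)))).reachable
  · -- n ≥ 3 : find an edge of M disjoint from X
    have hexg : ∃ g ∈ M, ∀ w ∈ X, w ∉ g := by
      by_contra hcon
      push_neg at hcon
      -- every edge of M meets X, so M injects into X, contradiction with ncard
      have hsub : M ⊆ (fun w => (hM.2.2 w).choose) '' X := by
        intro g hg
        obtain ⟨w, hwX, hwg⟩ := hcon g hg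
        refine ⟨w, hwX, ?_⟩
        exact pm_unique_edge hM (hM.2.2 w).choose_spec.1 hg (hM.2.2 w).choose_spec.2 hwg
      have h1 : M.ncard ≤ ((fun w => (hM.2.2 w).choose) '' X).ncard :=
        Set.ncard_le_ncard hsub (Set.toFinite _)
      have h2 : ((fun w => (hM.2.2 w).choose) '' X).ncard ≤ X.ncard :=
        Set.ncard_image_le (Set.toFinite _)
      rw [pm_ncard hM hcard] at h1
      omega
    obtain ⟨g, hgM, hgX⟩ := hexg
    obtain ⟨p, q, rfl, hpq, hadjpq⟩ := pm_decomp hM hgM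
    have hp : p ∈ Xᶜ := fun h => hgX p h (Sym2.mem_mk_left p q)
    have hq : q ∈ Xᶜ := fun h => hgX q h (Sym2.mem_mk_right p q)
    have hreach : ∀ x : ↥Xᶜ, (G.induce Xᶜ).Reachable x ⟨p, hp⟩ := by
      intro x
      by_cases hxp : (x : V) = p
      · exact (Subtype.ext hxp : x = ⟨p, hp⟩) ▸ SimpleGraph.Reachable.refl x
      · by_cases hxq : (x : V) = q
        · have : (G.induce Xᶜ).Adj x ⟨p, hp⟩ := induce_adj_of_adj (by rw [hxq]; exact hadjpq.symm)
          exact this.reachable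
        · obtain ⟨x', hex, hxx', _⟩ := pm_partner hM (x : V)
          have hexg2 : s((x : V), x') ≠ s(p,q) := by
            intro h
            have : (x : V) ∈ s(p,q) := h ▸ Sym2.mem_mk_left _ _
            rcases Sym2.mem_iff.1 this with h' | h'
            · exact hxp h'
            · exact hxq h'
          rcases hstar (x : V) x' p q hex hgM hexg2 with ⟨h1, _⟩ | ⟨h1, _⟩
          · exact (induce_adj_of_adj (x := x) (y := ⟨p, hp⟩) h1).reachable
          · refine SimpleGraph.Reachable.trans
              ((induce_adj_of_adj (x := x) (y := ⟨q, hq⟩) h1).reachable) ?_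
            exact (induce_adj_of_adj (x := (⟨q, hq⟩ : ↥Xᶜ)) (y := ⟨p, hp⟩) hadjpq.symm).reachable
    intro x y
    exact (hreach x).trans (hreach y).symm

end myaux

/-- Lemma 2.5, second part. -/
theorem stmt6 {V : Type*} [Fintype V] (n : ℕ) (hn : 2 ≤ n)
    (G : SimpleGraph V) (hcard : Fintype.card V = 2 * n)
    (hPM : ∃ M, IsPM G M) (hF : maxForcing G = n - 1)
    (hind : ¬ ∃ A : Set V, A.ncard = n ∧ ∀ a ∈ A, ∀ b ∈ A, ¬ G.Adj a b) :
    (3 ≤ vertexConn G ∧ (∃ e, e ∈ G.edgeSet) ∧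
        (∀ u v : V, u ≠ v → ∃ M, IsPM (G.induce ({u, v}ᶜ : Set V)) M)) ∧
      IsExtendable G 1 := by
    classical
  obtain ⟨M, hM, hfn⟩ := exists_max_pm hPM
  rw [hF] at hfn
  have hstar := star_prop hn hcard hM hfn
  have hind' : ¬ ∃ A : Set V, A.ncard = n ∧ ∀ a ∈ A, ∀ b ∈ A, ¬ G.Adj a b := hind
  have hcore : ∀ u v : V, u ≠ v → ∃ N, IsPMOn G ({u,v}ᶜ : Set V) N :=
    core_pmOn hn hcard hM hstar hind'
  have hconn := conn_aux hn hcard hM hstar hind'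
  have hcompl : ∀ X : Set V, X.ncard + Xᶜ.ncard = 2 * n := by
    intro X
    rw [Set.ncard_add_ncard_compl, Nat.card_eq_fintype_card, hcard]
  have hGconn : G.Connected := by
    have h0 := hconn ∅ (by simp)
    rw [Set.compl_empty] at h0
    exact (SimpleGraph.induceUnivIso G).connected_iff.mp h0
  refine ⟨⟨?_, ?_, ?_⟩, hGconn, by omega, hPM, ?_⟩
  · -- vertex connectivity at least 3
    refine le_csInf ⟨2 * n, Set.univ, ?_, Or.inr (by simp)⟩ ?_
    · rw [Set.ncard_univ, Nat.card_eq_fintype_card, hcard]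
    · rintro k ⟨X, hXk, hbad⟩
      by_contra hk3
      push_neg at hk3
      rcases hbad with hbad | hbad
      · exact hbad (hconn X (by omega))
      · have := hcompl X
        omega
  · -- G has an edge
    have : Nonempty V := Fintype.card_pos_iff.mp (by omega)
    obtain ⟨w, hw, _, _⟩ := pm_partner hM (Classical.arbitrary V)
    exact ⟨_, hM.1 hw⟩
  · -- bicritical
    intro u v huv
    obtain ⟨N, hN⟩ := hcore u v huv
    exact pmOn_to_induce hN
  · -- 1-extendable
    intro N hNsub hNd hN1
    obtain ⟨e, rfl⟩ := Set.ncard_eq_one.mp hN1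
    have he : e ∈ G.edgeSet := hNsub rfl
    obtain ⟨x, y, rfl, hadj⟩ : ∃ x y : V, e = s(x,y) ∧ G.Adj x y := by
      induction e using Sym2.ind with
      | _ x y => exact ⟨x, y, rfl, (SimpleGraph.mem_edgeSet G).mp he⟩
    obtain ⟨N', hN'⟩ := hcore x y hadj.ne
    refine ⟨N' ∪ {s(x,y)}, pmOn_union_edge hN' hadj, ?_⟩
    intro f hf
    rw [Set.mem_singleton_iff] at hf
    exact hf ▸ Or.inr rfl
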